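/- arXiv:2301.06121 — 2 statements merged into one kernel-verified Lean document; each statement's English description precedes it below -/
import Mathlib

section
/- Let ψ(s) > 0 for all s and suppose (r,v) is a solution of the shifted particle system dr_i/dt = v_i - v̄, dv_i/dt = (1/N)∑_j ψ(|r_i - r_j|)(v_j - v_i) - (1/N)∑_j ∇V(r_i - r_j) such that for all t ≥ 0 the dissipation vanishes: ∑_{i,j} ψ(|r_i(t) - r_j(t)|)|v_i(t) - v_j(t)|² = 0. Then v is constant with v_i(t) = (1/N)∑_j v_j(0) for all i and t, and ∑_j ∇V(r_i(t) - r_j(t)) = 0 for all i and t ≥ 0. -/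
open Finset

/-- If the dissipation vanishes for all `t ≥ 0`, the velocities are constant and equal to the
mean initial velocity, and the total interaction force on each particle vanishes. -/
theorem invariant_set_characterization (N d : ℕ) (hN : 2 ≤ N)
    (ψ : ℝ → ℝ) (hψ : ∀ s : ℝ, 0 < ψ s)
    (V : EuclideanSpace ℝ (Fin d) → ℝ) (hV : ContDiff ℝ 1 V)
    (hodd : ∀ y : EuclideanSpace ℝ (Fin d), gradient V y = -gradient V (-y))
    (r v : Fin N → ℝ → EuclideanSpace ℝ (Fin d))
    (vbar : EuclideanSpace ℝ (Fin d))
    (hvbar : vbar = (N : ℝ)⁻¹ • ∑ j : Fin N, v j 0)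
    (hr : ∀ i, ∀ t ≥ (0:ℝ), HasDerivAt (r i) (v i t - vbar) t)
    (hv : ∀ i, ∀ t ≥ (0:ℝ), HasDerivAt (v i)
      ((N : ℝ)⁻¹ • ∑ j : Fin N, ψ ‖r i t - r j t‖ • (v j t - v i t)
        - (N : ℝ)⁻¹ • ∑ j : Fin N, gradient V (r i t - r j t)) t)
    (hdiss : ∀ t ≥ (0:ℝ), ∑ i : Fin N, ∑ j : Fin N,
      ψ ‖r i t - r j t‖ * ‖v i t - v j t‖ ^ 2 = 0) :
    ∀ i, ∀ t ≥ (0:ℝ),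
      v i t = vbar ∧ ∑ j : Fin N, gradient V (r i t - r j t) = 0 := by
  have hNpos : 0 < (N : ℝ) := by
    have : 0 < N := lt_of_lt_of_le (by norm_num) hN
    exact_mod_cast this
  have hNR : (N : ℝ) ≠ 0 := ne_of_gt hNpos
  -- Step 1: all velocities are equal at each time
  have hvv : ∀ t ≥ (0:ℝ), ∀ i j : Fin N, v i t = v j t := by
    intro t ht i j
    have h0 := hdiss t ht
    have hnn : ∀ i ∈ (univ : Finset (Fin N)), (0:ℝ) ≤
        ∑ j : Fin N, ψ ‖r i t - r j t‖ * ‖v i t - v j t‖ ^ 2 := by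
      intro i _
      exact Finset.sum_nonneg fun j _ => mul_nonneg (hψ _).le (by positivity)
    have h1 := (Finset.sum_eq_zero_iff_of_nonneg hnn).mp h0 i (mem_univ i)
    have hnn2 : ∀ j ∈ (univ : Finset (Fin N)), (0:ℝ) ≤
        ψ ‖r i t - r j t‖ * ‖v i t - v j t‖ ^ 2 :=
      fun j _ => mul_nonneg (hψ _).le (by positivity)
    have h2 := (Finset.sum_eq_zero_iff_of_nonneg hnn2).mp h1 j (mem_univ j)
    rcases mul_eq_zero.mp h2 with h | h
    · exact absurd h (hψ _).ne'
    · have := pow_eq_zero_iff (n := 2) (by norm_num) |>.mp h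
      have := norm_eq_zero.mp this
      exact sub_eq_zero.mp this
  -- Step 2: interaction term vanishes, so v_i' = -(1/N) • force
  have hv' : ∀ i, ∀ t ≥ (0:ℝ), HasDerivAt (v i)
      (-((N : ℝ)⁻¹ • ∑ j : Fin N, gradient V (r i t - r j t))) t := by
    intro i t ht
    have hz : ∑ j : Fin N, ψ ‖r i t - r j t‖ • (v j t - v i t) = 0 := by
      refine Finset.sum_eq_zero fun j _ => ?_
      rw [hvv t ht j i, sub_self, smul_zero]
    have := hv i t ht
    rwa [hz, smul_zero, zero_sub] at this
  -- Step 3: sum of forces over all pairs vanishes (antisymmetry)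
  have hanti : ∀ t : ℝ, ∑ i : Fin N, ∑ j : Fin N, gradient V (r i t - r j t) = 0 := by
    intro t
    set x := ∑ i : Fin N, ∑ j : Fin N, gradient V (r i t - r j t) with hx
    have hswap : x = ∑ j : Fin N, ∑ i : Fin N, gradient V (r i t - r j t) := Finset.sum_comm
    have hneg : x = -x := by
      nth_rewrite 1 [hswap]
      rw [← Finset.sum_neg_distrib]
      refine Finset.sum_congr rfl fun j _ => ?_
      rw [← Finset.sum_neg_distrib]
      refine Finset.sum_congr rfl fun i _ => ?_
      rw [hodd (r i t - r j t), neg_sub]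
    have h2 : (2:ℝ) • x = 0 := by
      rw [two_smul]; nth_rewrite 1 [hneg]; rw [neg_add_cancel]
    rcases smul_eq_zero.mp h2 with h | h
    · norm_num at h
    · exact h
  -- Step 4: sum of velocities is constant
  have hS : ∀ t ≥ (0:ℝ), HasDerivAt (fun s => ∑ i : Fin N, v i s) 0 t := by
    intro t ht
    have := HasDerivAt.fun_sum (u := univ)
      (A := fun i s => v i s)
      (A' := fun i => -((N : ℝ)⁻¹ • ∑ j : Fin N, gradient V (r i t - r j t)))
      (fun i _ => hv' i t ht)
    have hzero : ∑ i : Fin N, -((N : ℝ)⁻¹ • ∑ j : Fin N, gradient V (r i t - r j t)) = 0 := by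
      rw [Finset.sum_neg_distrib, ← Finset.smul_sum, hanti, smul_zero, neg_zero]
    rwa [hzero] at this
  have hconstS : ∀ t ≥ (0:ℝ), ∑ i : Fin N, v i t = ∑ i : Fin N, v i 0 := by
    intro t ht
    refine constant_of_has_deriv_right_zero (f := fun s => ∑ i : Fin N, v i s) (a := 0) (b := t)
      (fun s hs => (hS s hs.1).continuousAt.continuousWithinAt)
      (fun s hs => (hS s hs.1).hasDerivWithinAt) t ⟨ht, le_refl t⟩
  -- Step 5: each velocity equals vbar
  have hveq : ∀ i, ∀ t ≥ (0:ℝ), v i t = vbar := by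
    intro i t ht
    have hsum : ∑ j : Fin N, v j t = (N : ℝ) • v i t := by
      rw [Finset.sum_congr rfl fun j _ => hvv t ht j i, Finset.sum_const, card_univ,
        Fintype.card_fin, ← Nat.cast_smul_eq_nsmul ℝ]
    have : (N : ℝ) • v i t = (N : ℝ) • vbar := by
      rw [← hsum, hconstS t ht, hvbar, smul_smul, mul_inv_cancel₀ hNR, one_smul]
    exact smul_right_injective _ hNR this
  intro i t ht
  refine ⟨hveq i t ht, ?_⟩
  -- Step 6: force vanishes
  have hud : UniqueDiffWithinAt ℝ (Set.Ici (0:ℝ)) t := uniqueDiffOn_Ici 0 t ht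
  have h1 : HasDerivWithinAt (v i) 0 (Set.Ici (0:ℝ)) t :=
    (hasDerivWithinAt_const t _ vbar).congr (fun s hs => hveq i s hs) (hveq i t ht)
  have h2 : HasDerivWithinAt (v i)
      (-((N : ℝ)⁻¹ • ∑ j : Fin N, gradient V (r i t - r j t))) (Set.Ici (0:ℝ)) t :=
    (hv' i t ht).hasDerivWithinAt
  have hD : -((N : ℝ)⁻¹ • ∑ j : Fin N, gradient V (r i t - r j t)) = 0 := by
    rw [← h2.derivWithin hud, h1.derivWithin hud]
  have := neg_eq_zero.mp hD
  rcases smul_eq_zero.mp this with h | h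
  · exact absurd h (inv_ne_zero hNR)
  · exact h
end

section
/- A continuously differentiable function C : ℝ^{Nd} × ℝ^{Nd} → ℝ is a Casimir function for the port-Hamiltonian system with structure matrix [[0, I],[-I, -Ψ(z)]] (i.e., (∂C/∂z)^T ([[0,I],[-I,0]] - [[0,0],[0,Ψ(z)]]) = 0 for all z) if and only if C is constant. -/
open Finset

/-- The position of particle `i` encoded in a flattened state vector. -/
noncomputable def particlePos (N d : ℕ) (r : EuclideanSpace ℝ (Fin N × Fin d)) (i : Fin N) :
    EuclideanSpace ℝ (Fin d) :=
  WithLp.toLp 2 (fun k => r (i, k))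

/-- The action of the block alignment matrix `Ψ(z)` (built from positions `r`) on a vector `w`:
`(Ψ w)_i = (1/N) ∑_j ψ(|x_j - x_i|)(w_i - w_j)`, componentwise in `ℝ^d`. -/
noncomputable def psiApply (N d : ℕ) (ψ : ℝ → ℝ)
    (r w : EuclideanSpace ℝ (Fin N × Fin d)) : EuclideanSpace ℝ (Fin N × Fin d) :=
  WithLp.toLp 2 (fun p : Fin N × Fin d => (N : ℝ)⁻¹ * ∑ j : Fin N,
    ψ ‖particlePos N d r j - particlePos N d r p.1‖ * (w (p.1, p.2) - w (j, p.2)))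

lemma psiApply_zero (N d : ℕ) (ψ : ℝ → ℝ) (r : EuclideanSpace ℝ (Fin N × Fin d)) :
    psiApply N d ψ r 0 = 0 := by
  ext p
  simp [psiApply]

/-- A continuously differentiable `C` is a Casimir function of the port-Hamiltonian system
(with structure matrix `J - R`, `J = [[0,I],[-I,0]]`, `R = [[0,0],[0,Ψ(z)]]`), i.e. its
differential annihilates `(J - R)w` for every state `z` and direction `w`, if and only if
`C` is constant. -/
theorem casimir_iff_constant (N d : ℕ) (hN : 2 ≤ N) (hd : 1 ≤ d)
    (ψ : ℝ → ℝ) (hψ : ∀ s, 0 ≤ ψ s)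
    (C : EuclideanSpace ℝ (Fin N × Fin d) × EuclideanSpace ℝ (Fin N × Fin d) → ℝ)
    (hC : ContDiff ℝ 1 C) :
    (∀ z w : EuclideanSpace ℝ (Fin N × Fin d) × EuclideanSpace ℝ (Fin N × Fin d),
        fderiv ℝ C z (w.2, -w.1 - psiApply N d ψ z.1 w.2) = 0) ↔
      ∃ γ : ℝ, ∀ z, C z = γ := by
  constructor
  · intro h
    have hdiff : Differentiable ℝ C := hC.differentiable one_ne_zero
    -- ∂C/∂v = 0
    have hv : ∀ z b, fderiv ℝ C z (0, b) = 0 := by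
      intro z b
      have := h z (-b, 0)
      simpa [psiApply_zero] using this
    have hr : ∀ z a, fderiv ℝ C z (a, 0) = 0 := by
      intro z a
      have h1 := h z (0, a)
      simp only [neg_zero, zero_sub] at h1
      have h2 : fderiv ℝ C z (a, 0)
          = fderiv ℝ C z (a, -psiApply N d ψ z.1 a) + fderiv ℝ C z (0, psiApply N d ψ z.1 a) := by
        rw [← (fderiv ℝ C z).map_add]
        congr 1
        simp
      rw [h2, h1, hv]
      simp
    have hzero : ∀ z, fderiv ℝ C z = 0 := by
      intro z
      refine ContinuousLinearMap.ext fun x => ?_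
      have : (x : EuclideanSpace ℝ (Fin N × Fin d) × EuclideanSpace ℝ (Fin N × Fin d))
          = (x.1, 0) + (0, x.2) := by simp
      rw [this, (fderiv ℝ C z).map_add, hv, hr]
      simp
    exact ⟨C 0, fun z => is_const_of_fderiv_eq_zero hdiff hzero z 0⟩
  · rintro ⟨γ, hγ⟩ z w
    have : C = fun _ => γ := funext hγ
    rw [this, fderiv_fun_const]
    simp
end
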